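/- Let p be an odd prime and (V,⟨·,·⟩) a nondegenerate symplectic 𝔽_p-vector space with a decomposition V = V⁺ ⊕ V⁻ into two Lagrangian subspaces with dim V⁺ = dim V⁻ ≥ 2. Let M be the group of symplectic automorphisms of V preserving both V⁺ and V⁻, acting on the Heisenberg group V^♯ by m·(v,a) = (mv,a), and let H = M ⋉ (V⁺ × 𝔽_p) inside M ⋉ V^♯. Let λ : H → ℂˣ be the character λ(m ⋉ (w,a)) = det(m|_{V⁺})^((p-1)/2) · φ(a), where φ is a nontrivial character of 𝔽_p and det(m|_{V⁺})^((p-1)/2) ∈ {±1} is viewed in ℂˣ. Then the induced representation Ind_H^{M ⋉ V^♯} λ contains no nonzero M-fixed vector. -/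

import Mathlib

open Module


section Aux
variable {K : Type*} [Field K] {W : Type*} [AddCommGroup W] [Module K W]
  [FiniteDimensional K W]

lemma my_det_prodMap {M₁ M₂ : Type*} [AddCommGroup M₁] [AddCommGroup M₂]
    [Module K M₁] [Module K M₂] [FiniteDimensional K M₁] [FiniteDimensional K M₂]
    (φ : M₁ →ₗ[K] M₁) (ψ : M₂ →ₗ[K] M₂) :
    LinearMap.det (φ.prodMap ψ) = LinearMap.det φ * LinearMap.det ψ := by
  classical
  let b₁ := Module.finBasis K M₁
  let b₂ := Module.finBasis K M₂
  rw [← LinearMap.det_toMatrix (b₁.prod b₂), LinearMap.toMatrix_prodMap,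
    Matrix.det_fromBlocks_zero₂₁, LinearMap.det_toMatrix, LinearMap.det_toMatrix]

/-- An automorphism of any subspace with prescribed nonzero determinant. -/
lemma exists_auto_det (U : Submodule K W) (hU : 0 < finrank K U) {d : K} (hd : d ≠ 0) :
    ∃ B : U ≃ₗ[K] U, LinearMap.det (B : U →ₗ[K] U) = d := by
  classical
  let b := Module.finBasis K U
  let i0 : Fin (finrank K U) := ⟨0, hU⟩
  let D : Matrix (Fin (finrank K U)) (Fin (finrank K U)) K :=
    Matrix.diagonal (fun i => if i = i0 then d else 1)
  have hDdet : D.det = d := by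
    rw [Matrix.det_diagonal, Finset.prod_ite_eq' Finset.univ i0 (fun _ => d)]
    simp
  have hunit : IsUnit (LinearMap.toMatrix b b (Matrix.toLin b b D)).det := by
    rw [LinearMap.toMatrix_toLin, hDdet]
    exact (isUnit_iff_ne_zero).2 hd
  refine ⟨LinearEquiv.ofIsUnitDet hunit, ?_⟩
  rw [LinearEquiv.coe_ofIsUnitDet hunit, LinearMap.det_toLin, hDdet]

/-- An automorphism of `W` with prescribed determinant `d` fixing a given functional. -/
lemma exists_auto_det_fixfun (hW : 2 ≤ finrank K W) (ℓ : Module.Dual K W)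
    {d : K} (hd : d ≠ 0) :
    ∃ A : W ≃ₗ[K] W, LinearMap.det (A : W →ₗ[K] W) = d ∧ ∀ x, ℓ (A x) = ℓ x := by
  classical
  have hrank : 0 < finrank K (LinearMap.ker ℓ) := by
    have h1 := LinearMap.finrank_range_add_finrank_ker ℓ
    have h2 : finrank K (LinearMap.range ℓ) ≤ 1 := by
      simpa using (Submodule.finrank_le (LinearMap.range ℓ))
    omega
  obtain ⟨B, hBdet⟩ := exists_auto_det (LinearMap.ker ℓ) hrank hd
  obtain ⟨S, hS⟩ := Submodule.exists_isCompl (LinearMap.ker ℓ)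
  let e := Submodule.prodEquivOfIsCompl (LinearMap.ker ℓ) S hS
  let A : W ≃ₗ[K] W := e.symm.trans ((B.prodCongr (LinearEquiv.refl K S)).trans e)
  have hAapp : ∀ x : W, A x = ↑(B (e.symm x).1) + ↑((e.symm x).2) := by
    intro x
    show e ((B.prodCongr (LinearEquiv.refl K S)) (e.symm x)) = _
    rw [LinearEquiv.prodCongr_apply, Submodule.coe_prodEquivOfIsCompl']
    rfl
  refine ⟨A, ?_, ?_⟩
  · have hcoe : (A : W →ₗ[K] W) =
        (e : LinearMap.ker ℓ × S →ₗ[K] W) ∘ₗ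
          ((B : LinearMap.ker ℓ →ₗ[K] LinearMap.ker ℓ).prodMap
            (LinearMap.id : S →ₗ[K] S)) ∘ₗ (e.symm : W →ₗ[K] LinearMap.ker ℓ × S) := by
      apply LinearMap.ext; intro x
      simp [A]
    rw [hcoe, LinearMap.det_conj, my_det_prodMap, hBdet, LinearMap.det_id, mul_one]
  · intro x
    have hx : x = ↑((e.symm x).1) + ↑((e.symm x).2) := by
      conv_lhs => rw [← e.apply_symm_apply x]
      rw [Submodule.coe_prodEquivOfIsCompl']
    rw [hAapp x, map_add, (B (e.symm x).1).2, zero_add]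
    conv_rhs => rw [hx]
    rw [map_add, ((e.symm x).1).2, zero_add]

/-- If a linear automorphism maps a submodule into itself, so does its inverse. -/
lemma symm_maps_into {V : Type*} [AddCommGroup V] [Module K V] [FiniteDimensional K V]
    (e : V ≃ₗ[K] V) (P : Submodule K V) (h : ∀ x ∈ P, e x ∈ P) :
    ∀ x ∈ P, e.symm x ∈ P := by
  have hle : P.map (e : V →ₗ[K] V) ≤ P := by
    rintro _ ⟨y, hy, rfl⟩; exact h y hy
  have heq : P.map (e : V →ₗ[K] V) = P :=
    Submodule.eq_of_le_of_finrank_eq hle (LinearEquiv.finrank_map_eq e P)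
  intro x hx
  rw [← heq] at hx
  obtain ⟨y, hy, rfl⟩ := hx
  simpa using hy

end Aux

section Main
variable {K : Type*} [Field K] {V : Type*} [AddCommGroup V] [Module K V]
  [FiniteDimensional K V]

omit [FiniteDimensional K V] in
/-- skew-symmetry from the alternating property -/
lemma skew_of_alt (f : V →ₗ[K] V →ₗ[K] K) (halt : ∀ v, f v v = 0) (a b : V) :
    f a b = - f b a := by
  have h := halt (a + b)
  simp only [map_add, LinearMap.add_apply, halt a, halt b] at h
  linear_combination h

/-- The key construction: a symplectic automorphism preserving both Lagrangians
`P` and `Q`, fixing a given `u ∈ Q`, whose restriction to `P` has determinant `c`. -/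
lemma exists_M_elt (f : V →ₗ[K] V →ₗ[K] K) (halt : ∀ v, f v v = 0)
    (P Q : Submodule K V) (hcompl : IsCompl P Q)
    (hPiso : ∀ x ∈ P, ∀ y ∈ P, f x y = 0)
    (hQiso : ∀ x ∈ Q, ∀ y ∈ Q, f x y = 0)
    (hPlag : ∀ v : V, (∀ w ∈ P, f v w = 0) → v ∈ P)
    (hdim : finrank K P = finrank K Q)
    (hdim2 : 2 ≤ finrank K P)
    {c : K} (hc : c ≠ 0) (u : V) (hu : u ∈ Q) :
    ∃ (m' : V ≃ₗ[K] V) (hmP : ∀ x ∈ P, m' x ∈ P),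
      (∀ v w, f (m' v) (m' w) = f v w) ∧ (∀ x ∈ Q, m' x ∈ Q) ∧ m' u = u ∧
      LinearMap.det ((m' : V →ₗ[K] V).restrict hmP) = c := by
  classical
  -- the functional on P given by pairing with u
  set ℓ : Module.Dual K P := (f u).domRestrict P with hℓdef
  obtain ⟨A', hA'det, hA'ℓ⟩ := exists_auto_det_fixfun hdim2 ℓ hc
  -- the pairing Q → Dual P
  set Bmap : Q →ₗ[K] Module.Dual K P := (((f.domRestrict Q).flip).domRestrict P).flip
    with hBdef
  have hBapp : ∀ (q : Q) (x : P), Bmap q x = f q x := fun q x => rfl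
  have hBinj : Function.Injective Bmap := by
    rw [← LinearMap.ker_eq_bot, Submodule.eq_bot_iff]
    intro q hq
    have hq0 : ∀ x ∈ P, f (q : V) x = 0 := by
      intro x hx
      have : Bmap q ⟨x, hx⟩ = 0 := by rw [hq]; rfl
      simpa [hBapp] using this
    have hqP : (q : V) ∈ P := hPlag q hq0
    have : (q : V) = 0 := by
      have := hcompl.inf_eq_bot
      have hmem : (q : V) ∈ P ⊓ Q := ⟨hqP, q.2⟩
      rw [this] at hmem
      simpa using hmem
    exact Subtype.ext this
  have hfr : finrank K Q = finrank K (Module.Dual K P) := by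
    rw [Subspace.dual_finrank_eq, hdim]
  have hBsurj : Function.Surjective Bmap :=
    (LinearMap.injective_iff_surjective_of_finrank_eq_finrank hfr).mp hBinj
  set Beq : Q ≃ₗ[K] Module.Dual K P := LinearEquiv.ofBijective Bmap ⟨hBinj, hBsurj⟩
    with hBeqdef
  have hBeqapp : ∀ q : Q, Beq q = Bmap q := fun q => rfl
  set A : Q ≃ₗ[K] Q := (Beq.trans (A'.symm.dualMap)).trans Beq.symm with hAdef
  have hABmap : ∀ q : Q, Bmap (A q) = A'.symm.dualMap (Beq q) := by
    intro q
    have : Beq (A q) = A'.symm.dualMap (Beq q) := by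
      rw [hAdef]; simp
    rw [← hBeqapp]; exact this
  have hkey : ∀ (q : Q) (x : P), f ((A q) : V) ((A' x) : V) = f q x := by
    intro q x
    have h1 : Bmap (A q) (A' x) = (Beq q) (A'.symm (A' x)) := by
      rw [hABmap q]; rfl
    rw [hBapp] at h1
    rw [h1, LinearEquiv.symm_apply_apply, hBeqapp, hBapp]
  have hA'inv : ∀ x : P, ℓ (A'.symm x) = ℓ x := by
    intro x
    conv_rhs => rw [← A'.apply_symm_apply x]
    rw [hA'ℓ]
  have hAu : A ⟨u, hu⟩ = ⟨u, hu⟩ := by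
    apply hBinj
    apply LinearMap.ext
    intro x
    have h1 : Bmap (A ⟨u, hu⟩) x = (Beq ⟨u, hu⟩) (A'.symm x) := by
      rw [hABmap]; rfl
    rw [h1, hBeqapp, hBapp, hBapp]
    show f u ((A'.symm x : P) : V) = f u (x : V)
    have := hA'inv x
    rw [hℓdef] at this
    simpa using this
  -- assemble the automorphism of V
  set e := Submodule.prodEquivOfIsCompl P Q hcompl with hedef
  set m' : V ≃ₗ[K] V := e.symm.trans ((A'.prodCongr A).trans e) with hm'def
  have hm'app : ∀ v : V, m' v = ↑(A' (e.symm v).1) + ↑(A (e.symm v).2) := by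
    intro v
    show e ((A'.prodCongr A) (e.symm v)) = _
    rw [LinearEquiv.prodCongr_apply, Submodule.coe_prodEquivOfIsCompl']
  have hdecomp : ∀ v : V, v = ↑((e.symm v).1) + ↑((e.symm v).2) := by
    intro v
    conv_lhs => rw [← e.apply_symm_apply v]
    rw [Submodule.coe_prodEquivOfIsCompl']
  have hmP : ∀ x (hx : x ∈ P), m' x = (↑(A' ⟨x, hx⟩) : V) := by
    intro x hx
    have h1 : e.symm x = (⟨x, hx⟩, 0) :=
      Submodule.prodEquivOfIsCompl_symm_apply_left P Q hcompl ⟨x, hx⟩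
    rw [hm'app, h1, map_zero]
    simp
  have hmQ : ∀ x (hx : x ∈ Q), m' x = (↑(A ⟨x, hx⟩) : V) := by
    intro x hx
    have h1 : e.symm x = (0, ⟨x, hx⟩) :=
      Submodule.prodEquivOfIsCompl_symm_apply_right P Q hcompl ⟨x, hx⟩
    rw [hm'app, h1, map_zero]
    simp
  have hmPmem : ∀ x ∈ P, m' x ∈ P := by
    intro x hx; rw [hmP x hx]; exact (A' ⟨x, hx⟩).2
  refine ⟨m', hmPmem, ?_, ?_, ?_, ?_⟩
  · -- symplectic
    intro v w
    have hv := hdecomp v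
    have hw := hdecomp w
    set pv := (e.symm v).1; set qv := (e.symm v).2
    set pw := (e.symm w).1; set qw := (e.symm w).2
    rw [hm'app v, hm'app w]
    conv_rhs => rw [hv, hw]
    simp only [map_add, LinearMap.add_apply]
    rw [hPiso _ (A' pv).2 _ (A' pw).2, hPiso _ pv.2 _ pw.2,
      hQiso _ (A qv).2 _ (A qw).2, hQiso _ qv.2 _ qw.2,
      hkey qv pw]
    have h2 : f ((A' pv) : V) ((A qw) : V) = f (pv : V) (qw : V) := by
      rw [skew_of_alt f halt, hkey qw pv, ← skew_of_alt f halt]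
    rw [h2]
  · -- preserves Q
    intro x hx; rw [hmQ x hx]; exact (A ⟨x, hx⟩).2
  · -- fixes u
    rw [hmQ u hu, hAu]
  · -- determinant of restriction to P
    have hres : (m' : V →ₗ[K] V).restrict hmPmem = (A' : P →ₗ[K] P) := by
      apply LinearMap.ext
      intro x
      apply Subtype.ext
      rw [LinearMap.restrict_coe_apply]
      exact hmP x.1 x.2
    rw [hres, hA'det]

end Main


/-- The Heisenberg multiplication on `V × 𝔽_p`:
`(v,a)·(v',a') = (v+v', a+a'+(1/2)⟨v,v'⟩)`. -/
def heisMul {p : ℕ} {V : Type*} [AddCommGroup V] [Module (ZMod p) V]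
    (f : V →ₗ[ZMod p] V →ₗ[ZMod p] ZMod p) (x y : V × ZMod p) : V × ZMod p :=
  (x.1 + y.1, x.2 + y.2 + (2 : ZMod p)⁻¹ * f x.1 y.1)

/-- Multiplication in the semidirect product `GL(V) ⋉ V^♯`, where a linear automorphism
`m` acts on the Heisenberg group `V^♯` by `m·(v,a) = (mv,a)`:
`(m,x)(m',x') = (m ∘ m', x · (m·x'))`. -/
def sdMul {p : ℕ} {V : Type*} [AddCommGroup V] [Module (ZMod p) V]
    (f : V →ₗ[ZMod p] V →ₗ[ZMod p] ZMod p)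
    (g h : (V ≃ₗ[ZMod p] V) × (V × ZMod p)) : (V ≃ₗ[ZMod p] V) × (V × ZMod p) :=
  (h.1.trans g.1, heisMul f g.2 (g.1 h.2.1, h.2.2))

/-- let `V = V⁺ ⊕ V⁻` be a nondegenerate symplectic `𝔽_p`-vector space
with both summands Lagrangian of dimension `≥ 2`, `M` the group of symplectic
automorphisms preserving `V⁺` and `V⁻` (acting on `V^♯` by `m·(v,a) = (mv,a)`),
`H = M ⋉ (V⁺ × 𝔽_p)` and `λ(m ⋉ (w,a)) = det(m|_{V⁺})^((p-1)/2) · φ(a)` with `φ` a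
nontrivial character of `𝔽_p`. Then `Ind_H^{M ⋉ V^♯} λ` has no nonzero `M`-fixed
vector. -/
theorem no_M_fixed_vector (p : ℕ) [Fact p.Prime] (hodd : p ≠ 2)
    (V : Type*) [AddCommGroup V] [Module (ZMod p) V] [FiniteDimensional (ZMod p) V]
    (f : V →ₗ[ZMod p] V →ₗ[ZMod p] ZMod p)
    (halt : ∀ v : V, f v v = 0)
    (hnd : ∀ v : V, v ≠ 0 → ∃ w : V, f v w ≠ 0)
    (P Q : Submodule (ZMod p) V) (hcompl : IsCompl P Q)
    (hPiso : ∀ x ∈ P, ∀ y ∈ P, f x y = 0)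
    (hQiso : ∀ x ∈ Q, ∀ y ∈ Q, f x y = 0)
    (hPlag : ∀ v : V, (∀ w ∈ P, f v w = 0) → v ∈ P)
    (hQlag : ∀ v : V, (∀ w ∈ Q, f v w = 0) → v ∈ Q)
    (hdim : Module.finrank (ZMod p) P = Module.finrank (ZMod p) Q)
    (hdim2 : 2 ≤ Module.finrank (ZMod p) P)
    -- `φ` is a nontrivial character of `𝔽_p`:
    (φ : ZMod p → ℂ)
    (hφmul : ∀ a b : ZMod p, φ (a + b) = φ a * φ b)
    (hφnt : ∃ a : ZMod p, φ a ≠ 1)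
    -- `F` lies in the induced representation `Ind_H^{M ⋉ V^♯} λ`:
    (F : (V ≃ₗ[ZMod p] V) × (V × ZMod p) → ℂ)
    (hFind : ∀ (m : V ≃ₗ[ZMod p] V),
      (∀ v w : V, f (m v) (m w) = f v w) →
      ∀ (hmP : ∀ x ∈ P, m x ∈ P), (∀ x ∈ Q, m x ∈ Q) →
      ∀ w ∈ P, ∀ (a : ZMod p) (g : (V ≃ₗ[ZMod p] V) × (V × ZMod p)),
        F (sdMul f (m, (w, a)) g)
          = (if LinearMap.det (m.toLinearMap.restrict hmP) ^ ((p - 1) / 2) = 1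
              then (1 : ℂ) else -1) * φ a * F g)
    -- `F` is fixed by `M`:
    (hFfix : ∀ (m : V ≃ₗ[ZMod p] V),
      (∀ v w : V, f (m v) (m w) = f v w) →
      (∀ x ∈ P, m x ∈ P) → (∀ x ∈ Q, m x ∈ Q) →
      ∀ g : (V ≃ₗ[ZMod p] V) × (V × ZMod p),
        F (sdMul f g (m, ((0 : V), (0 : ZMod p)))) = F g) :
    -- then `F` vanishes on `M ⋉ V^♯`:
    ∀ g : (V ≃ₗ[ZMod p] V) × (V × ZMod p),
      (∀ v w : V, f (g.1 v) (g.1 w) = f v w) →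
      (∀ x ∈ P, g.1 x ∈ P) → (∀ x ∈ Q, g.1 x ∈ Q) →
      F g = 0 := by
  classical
  have hp : p.Prime := Fact.out
  have hp3 : 3 ≤ p := by
    have := hp.two_le
    omega
  have hodd2 : p % 2 = 1 := Nat.odd_iff.mp (hp.odd_of_ne_two hodd)
  -- basic facts about the identity element of M
  have hreflsymp : ∀ v w : V,
      f ((LinearEquiv.refl (ZMod p) V) v) ((LinearEquiv.refl (ZMod p) V) w) = f v w :=
    fun v w => rfl
  have hreflP : ∀ x ∈ P, (LinearEquiv.refl (ZMod p) V) x ∈ P := fun x hx => hx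
  have hreflQ : ∀ x ∈ Q, (LinearEquiv.refl (ZMod p) V) x ∈ Q := fun x hx => hx
  have hrefl_det : ∀ (h : ∀ x ∈ P, (LinearEquiv.refl (ZMod p) V) x ∈ P),
      LinearMap.det ((LinearEquiv.refl (ZMod p) V).toLinearMap.restrict h) = 1 := by
    intro h
    have heq : (LinearEquiv.refl (ZMod p) V).toLinearMap.restrict h =
        (LinearMap.id : P →ₗ[ZMod p] P) := by
      apply LinearMap.ext; intro x; apply Subtype.ext
      rw [LinearMap.restrict_coe_apply]; rfl
    rw [heq, LinearMap.det_id]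
  -- multiplying by the identity of the semidirect product
  have hid : ∀ G : (V ≃ₗ[ZMod p] V) × (V × ZMod p), F G = φ 0 * F G := by
    intro G
    have h := hFind (LinearEquiv.refl (ZMod p) V) hreflsymp hreflP hreflQ 0 (zero_mem P) 0 G
    have harg : sdMul f (LinearEquiv.refl (ZMod p) V, ((0 : V), (0 : ZMod p))) G = G := by
      simp [sdMul, heisMul]
    rw [harg, hrefl_det, one_pow, if_pos rfl, one_mul] at h
    exact h
  intro g hsymp hgP hgQ
  by_cases hφ0 : φ 0 = 0
  · have := hid g
    rw [hφ0, zero_mul] at this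
    exact this
  have hφ0' : φ 0 = 1 := by
    have h' : φ 0 = φ 0 * φ 0 := by
      have := hφmul 0 0
      simpa using this
    have h2 : φ 0 * 1 = φ 0 * φ 0 := by rw [mul_one]; exact h'
    exact (mul_left_cancel₀ hφ0 h2).symm
  -- Key step: F vanishes on (1, (u, 0)) for u ∈ Q
  have hkey0 : ∀ u ∈ Q, F (LinearEquiv.refl (ZMod p) V, (u, (0 : ZMod p))) = 0 := by
    intro u hu
    obtain ⟨c, hcns⟩ := FiniteField.exists_nonsquare
      (F := ZMod p) (by rw [ZMod.ringChar_zmod_n]; exact hodd)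
    have hc0 : c ≠ 0 := by
      intro h; exact hcns (h ▸ ⟨0, by ring⟩)
    obtain ⟨m', hmP', hsymp', hmQ', hmu', hdet'⟩ :=
      exists_M_elt f halt P Q hcompl hPiso hQiso hPlag hdim hdim2 hc0 u hu
    have hcond : ¬ (LinearMap.det ((m'.toLinearMap).restrict hmP') ^ ((p - 1) / 2) = 1) := by
      rw [hdet']
      have hhalf : (p - 1) / 2 = p / 2 := by omega
      rw [hhalf]
      intro h1
      exact hcns ((ZMod.euler_criterion p hc0).mpr h1)
    have hsympsymm : ∀ v w : V, f (m'.symm v) (m'.symm w) = f v w := by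
      intro v w
      have := hsymp' (m'.symm v) (m'.symm w)
      simpa using this.symm
    have c1 := hFfix m'.symm hsympsymm (symm_maps_into m' P hmP') (symm_maps_into m' Q hmQ')
      (LinearEquiv.refl (ZMod p) V, (u, (0 : ZMod p)))
    have harg1 : sdMul f (LinearEquiv.refl (ZMod p) V, (u, (0 : ZMod p)))
        (m'.symm, ((0 : V), (0 : ZMod p))) = (m'.symm, (u, (0 : ZMod p))) := by
      simp [sdMul, heisMul]
    rw [harg1] at c1
    have c2 := hFind m' hsymp' hmP' hmQ' 0 (zero_mem P) 0 (m'.symm, (u, (0 : ZMod p)))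
    have harg2 : sdMul f (m', ((0 : V), (0 : ZMod p))) (m'.symm, (u, (0 : ZMod p)))
        = (LinearEquiv.refl (ZMod p) V, (u, (0 : ZMod p))) := by
      simp [sdMul, heisMul, hmu', LinearEquiv.symm_trans_self]
    rw [harg2, if_neg hcond, hφ0', c1] at c2
    -- c2 : F (refl,(u,0)) = -1 * 1 * F (refl,(u,0))
    have h2 : (2 : ℂ) * F (LinearEquiv.refl (ZMod p) V, (u, (0 : ZMod p))) = 0 := by
      linear_combination c2
    have := mul_eq_zero.mp h2
    rcases this with h | h
    · exact absurd h two_ne_zero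
    · exact h
  -- decompose the Heisenberg part of g
  have hg1 : g.2.1 ∈ P ⊔ Q := by rw [hcompl.sup_eq_top]; trivial
  obtain ⟨w, hw, u, hu, hwu⟩ := Submodule.mem_sup.mp hg1
  -- step B : F (g.1, (u,0)) = F (refl, (u,0)) = 0
  have hsympsymm : ∀ v w : V, f (g.1.symm v) (g.1.symm w) = f v w := by
    intro v w
    have := hsymp (g.1.symm v) (g.1.symm w)
    simpa using this.symm
  have b1 := hFfix g.1.symm hsympsymm (symm_maps_into g.1 P hgP) (symm_maps_into g.1 Q hgQ)
    (g.1, (u, (0 : ZMod p)))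
  have hargb : sdMul f (g.1, (u, (0 : ZMod p))) (g.1.symm, ((0 : V), (0 : ZMod p)))
      = (LinearEquiv.refl (ZMod p) V, (u, (0 : ZMod p))) := by
    simp [sdMul, heisMul, LinearEquiv.symm_trans_self]
  rw [hargb] at b1
  -- step A : factor g through H times (g.1, (u,0))
  have a1 := hFind (LinearEquiv.refl (ZMod p) V) hreflsymp hreflP hreflQ w hw
    (g.2.2 - (2 : ZMod p)⁻¹ * f w u) (g.1, (u, (0 : ZMod p)))
  have harga : sdMul f (LinearEquiv.refl (ZMod p) V, (w, g.2.2 - (2 : ZMod p)⁻¹ * f w u))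
      (g.1, (u, (0 : ZMod p))) = g := by
    show (g.1.trans (LinearEquiv.refl (ZMod p) V),
      (w + u, g.2.2 - (2 : ZMod p)⁻¹ * f w u + 0 + (2 : ZMod p)⁻¹ * f w u)) = g
    rw [LinearEquiv.trans_refl, hwu]
    have : g.2.2 - (2 : ZMod p)⁻¹ * f w u + 0 + (2 : ZMod p)⁻¹ * f w u = g.2.2 := by ring
    rw [this]
  rw [harga, hrefl_det, one_pow, if_pos rfl, one_mul] at a1
  rw [a1, ← b1, hkey0 u hu, mul_zero]
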